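/- arXiv:1309.2802 — 3 statements merged into one kernel-verified Lean document; each statement's English description precedes it below -/
import Mathlib

section
/- In a finite Markov chain with a coloring col : S → D and a Muller condition F ⊆ P(D), started at state s, if some recurrent class C reachable from s satisfies col(C) ∈ F, then with positive probability the set of colors visited infinitely often belongs to F. -/
open MeasureTheory

/-- Graph reachability in the positive-transition graph of a Markov chain. -/
def Reach {S : Type*} (δ : S → PMF S) : S → S → Prop :=
  Relation.ReflTransGen (fun s s' => δ s s' ≠ 0)

/-- A recurrent class: a bottom strongly connected component of the
positive-transition graph (nonempty, mutually reachable, closed under edges). -/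
def IsRecClass {S : Type*} (δ : S → PMF S) (C : Set S) : Prop :=
  C.Nonempty ∧ (∀ x ∈ C, ∀ y ∈ C, Reach δ x y) ∧
    (∀ x ∈ C, ∀ y, δ x y ≠ 0 → y ∈ C)

/-- `μ` is the trajectory measure of the Markov chain `δ` started at `s`:
a probability measure whose cylinder probabilities are given by the product
of the transition probabilities. -/
def IsMarkovMeasure {S : Type*} [Fintype S] [DecidableEq S] [MeasurableSpace S]
    (δ : S → PMF S) (s : S) (μ : Measure (ℕ → S)) : Prop :=
  IsProbabilityMeasure μ ∧
  ∀ (n : ℕ) (w : ℕ → S),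
    μ {ρ | ∀ i ≤ n, ρ i = w i} =
      (if w 0 = s then 1 else 0) * ∏ i ∈ Finset.range n, δ (w i) (w (i + 1))

open scoped ENNReal

namespace Stmt7Aux
set_option linter.unusedSectionVars false

variable {S : Type*} [Fintype S]




open Classical in
/-- weight of length-`n` paths from `x` staying in `C` and avoiding `c'` (at times 1..n). -/
noncomputable def gA (δ : S → PMF S) (C : Set S) (c' : S) : ℕ → S → ℝ≥0∞
  | 0, _ => 1
  | n+1, x => ∑ y ∈ Finset.univ.filter (fun y => y ∈ C ∧ y ≠ c'),
      δ x y * gA δ C c' n y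

open Classical in
/-- weight of paths from `x` staying in `C` that hit `c'` within `n` steps. -/
noncomputable def hA (δ : S → PMF S) (C : Set S) (c' : S) : ℕ → S → ℝ≥0∞
  | 0, _ => 0
  | n+1, x => δ x c' + ∑ y ∈ Finset.univ.filter (fun y => y ∈ C ∧ y ≠ c'),
      δ x y * hA δ C c' n y

open Classical in
/-- `f` free steps within `C`, then `t` steps avoiding `c'`. -/
noncomputable def GA (δ : S → PMF S) (C : Set S) (c' : S) : ℕ → ℕ → S → ℝ≥0∞
  | 0, t, x => gA δ C c' t x
  | f+1, t, x => ∑ y ∈ Finset.univ.filter (fun y => y ∈ C),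
      δ x y * GA δ C c' f t y

variable (δ : S → PMF S) (C : Set S) (c' : S)

lemma sum_pmf (x : S) : ∑ y, δ x y = 1 := by
  rw [← tsum_fintype (L := SummationFilter.unconditional _)]; exact (δ x).tsum_coe

lemma g_add_h_le_one (n : ℕ) (x : S) : gA δ C c' n x + hA δ C c' n x ≤ 1 := by
  classical
  induction n generalizing x with
  | zero => simp [gA, hA]
  | succ n ih =>
    simp only [gA, hA]
    rw [add_comm ((δ x) c'), ← add_assoc, ← Finset.sum_add_distrib]
    calc (∑ y ∈ Finset.univ.filter (fun y => y ∈ C ∧ y ≠ c'),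
            (δ x y * gA δ C c' n y + δ x y * hA δ C c' n y)) + δ x c'
        ≤ (∑ y ∈ Finset.univ.filter (fun y => y ∈ C ∧ y ≠ c'), δ x y) + δ x c' := by
          gcongr with y hy
          rw [← mul_add]
          calc δ x y * (gA δ C c' n y + hA δ C c' n y) ≤ δ x y * 1 := by
                gcongr; exact ih y
            _ = δ x y := mul_one _
      _ = ∑ y ∈ insert c' (Finset.univ.filter (fun y => y ∈ C ∧ y ≠ c')), δ x y := by
          rw [Finset.sum_insert (by simp)]; ring
      _ ≤ ∑ y, δ x y := Finset.sum_le_sum_of_subset (Finset.subset_univ _)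
      _ = 1 := sum_pmf δ x

lemma g_le_one (n : ℕ) (x : S) : gA δ C c' n x ≤ 1 :=
  le_trans le_self_add (g_add_h_le_one δ C c' n x)

lemma h_mono : ∀ {n m : ℕ}, n ≤ m → ∀ x, hA δ C c' n x ≤ hA δ C c' m x := by
  classical
  have step : ∀ n x, hA δ C c' n x ≤ hA δ C c' (n+1) x := by
    intro n
    induction n with
    | zero => intro x; simp [hA]
    | succ n ih =>
      intro x
      simp only [hA]
      gcongr with y hy
      exact ih y
  intro n m hnm x
  induction hnm with
  | refl => exact le_refl _
  | step h ih => exact le_trans ih (step _ _)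





lemma reach_path {x y : S} (h : Reach δ x y) :
    ∃ (n : ℕ) (w : ℕ → S), w 0 = x ∧ w n = y ∧ ∀ i < n, δ (w i) (w (i+1)) ≠ 0 := by
  induction h with
  | refl => exact ⟨0, fun _ => x, rfl, rfl, by omega⟩
  | @tail b c hab hbc ih =>
    obtain ⟨n, w, h0, hn, he⟩ := ih
    refine ⟨n+1, fun i => if i ≤ n then w i else c, by simp [h0], by simp, ?_⟩
    intro i hi
    rcases Nat.lt_or_ge i n with h1 | h1
    · simpa [Nat.le_of_lt h1, Nat.succ_le_of_lt h1] using he i h1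
    · have : i = n := by omega
      subst this
      simpa [hn] using hbc

lemma h_step1 {x : S} {n : ℕ} (hd : δ x c' ≠ 0) : hA δ C c' (n+1) x ≠ 0 := by
  simp only [hA, ne_eq, add_eq_zero]
  tauto

lemma h_step2 {x y : S} {n : ℕ} (hy : y ∈ C) (hyc : y ≠ c') (hd : δ x y ≠ 0)
    (hh : hA δ C c' n y ≠ 0) : hA δ C c' (n+1) x ≠ 0 := by
  classical
  have hterm : δ x y * hA δ C c' n y ≤ hA δ C c' (n+1) x := by
    calc δ x y * hA δ C c' n y
        ≤ ∑ z ∈ Finset.univ.filter (fun z => z ∈ C ∧ z ≠ c'), δ x z * hA δ C c' n z :=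
          Finset.single_le_sum (f := fun z => δ x z * hA δ C c' n z)
            (fun _ _ => zero_le) (by simp [hy, hyc])
      _ ≤ hA δ C c' (n+1) x := by simp only [hA]; exact le_add_self
  intro h0
  rw [h0, le_zero_iff, mul_eq_zero] at hterm
  tauto

lemma h_pos (hrec : IsRecClass δ C) :
    ∀ ℓ (x : S), x ∈ C → ∀ u : ℕ → S, u 0 = x → u (ℓ+1) = c' →
      (∀ i < ℓ+1, δ (u i) (u (i+1)) ≠ 0) → hA δ C c' (ℓ+1) x ≠ 0 := by
  intro ℓ
  induction ℓ with
  | zero =>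
    intro x hx u h0 h1 he
    exact h_step1 δ C c' (by rw [← h0, ← h1]; exact he 0 (by omega))
  | succ m ih =>
    intro x hx u h0 h1 he
    have hu1 : u 1 ∈ C := hrec.2.2 x hx (u 1) (by rw [← h0]; exact he 0 (by omega))
    by_cases hc : u 1 = c'
    · exact h_step1 δ C c' (by rw [← h0, ← hc]; exact he 0 (by omega))
    · refine h_step2 δ C c' hu1 hc (by rw [← h0]; exact he 0 (by omega)) ?_
      exact ih (u 1) hu1 (fun i => u (i+1)) rfl h1 (fun i hi => he (i+1) (by omega))

lemma exists_hit (hrec : IsRecClass δ C) (hc' : c' ∈ C) :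
    ∀ x ∈ C, ∃ ℓ, hA δ C c' ℓ x ≠ 0 := by
  intro x hx
  obtain ⟨n, w, h0, hn, he⟩ := reach_path δ (hrec.2.1 x hx c' hc')
  match n with
  | ℓ+1 => exact ⟨ℓ+1, h_pos δ C c' hrec ℓ x hx w h0 hn he⟩
  | 0 =>
    -- x = c'
    have hxc : x = c' := by rw [← h0, hn]
    obtain ⟨y, hy⟩ := (δ x).support_nonempty
    rw [PMF.mem_support_iff] at hy
    have hyC : y ∈ C := hrec.2.2 x hx y hy
    by_cases hyc : y = c'
    · exact ⟨1, h_step1 δ C c' (by rwa [← hyc])⟩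
    · obtain ⟨m, u, hu0, hum, hue⟩ := reach_path δ (hrec.2.1 y hyC c' hc')
      match m with
      | 0 => exact absurd (by rw [← hu0, hum]) hyc
      | ℓ+1 =>
        exact ⟨ℓ+2, h_step2 δ C c' hyC hyc hy
          (h_pos δ C c' hrec ℓ y hyC u hu0 hum hue)⟩


lemma exists_N (hrec : IsRecClass δ C) (hc' : c' ∈ C) :
    ∃ N, ∀ x ∈ C, hA δ C c' N x ≠ 0 := by
  have h : ∀ x : S, ∃ ℓ, x ∈ C → hA δ C c' ℓ x ≠ 0 := by
    intro x
    by_cases hx : x ∈ C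
    · obtain ⟨ℓ, hℓ⟩ := exists_hit δ C c' hrec hc' x hx
      exact ⟨ℓ, fun _ => hℓ⟩
    · exact ⟨0, fun hx' => absurd hx' hx⟩
  choose f hf using h
  refine ⟨Finset.univ.sup f, fun x hx => ?_⟩
  intro h0
  exact hf x hx (le_antisymm (le_trans (h_mono δ C c' (Finset.le_sup (Finset.mem_univ x)) x) h0.le) (zero_le))

lemma g_shift {t : ℕ} {β : ℝ≥0∞} (hβ : ∀ y ∈ C, gA δ C c' t y ≤ β) :
    ∀ n (x : S), x ∈ C → gA δ C c' (n + t) x ≤ gA δ C c' n x * β := by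
  classical
  intro n
  induction n with
  | zero => intro x hx; simpa [gA] using hβ x hx
  | succ n ih =>
    intro x hx
    have : (n + 1) + t = (n + t) + 1 := by omega
    rw [this]
    simp only [gA, Finset.sum_mul]
    refine Finset.sum_le_sum ?_
    intro y hy
    simp only [Finset.mem_filter] at hy
    rw [mul_assoc]
    exact mul_le_mul_right (ih y hy.2.1) _

lemma g_pow {N : ℕ} {q : ℝ≥0∞} (hq : ∀ x ∈ C, gA δ C c' N x ≤ q) :
    ∀ r, ∀ x ∈ C, gA δ C c' (r * N) x ≤ q ^ r := by
  intro r
  induction r with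
  | zero => intro x hx; simp [gA]
  | succ r ih =>
    intro x hx
    have : (r + 1) * N = N + r * N := by ring
    rw [this, pow_succ, mul_comm (q ^ r)]
    calc gA δ C c' (N + r * N) x ≤ gA δ C c' N x * q ^ r := g_shift δ C c' ih N x hx
      _ ≤ q * q ^ r := by gcongr; exact hq x hx

lemma sum_filter_le_one (x : S) (p : S → Prop) [DecidablePred p] :
    ∑ y ∈ Finset.univ.filter p, δ x y ≤ 1 := by
  calc ∑ y ∈ Finset.univ.filter p, δ x y ≤ ∑ y, δ x y :=
      Finset.sum_le_sum_of_subset (Finset.subset_univ _)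
    _ = 1 := sum_pmf δ x

lemma G_le {t : ℕ} {β : ℝ≥0∞} (hβ : ∀ y ∈ C, gA δ C c' t y ≤ β) :
    ∀ f (x : S), x ∈ C → GA δ C c' f t x ≤ β := by
  classical
  intro f
  induction f with
  | zero => intro x hx; exact hβ x hx
  | succ f ih =>
    intro x hx
    simp only [GA]
    calc ∑ y ∈ Finset.univ.filter (fun y => y ∈ C), δ x y * GA δ C c' f t y
        ≤ ∑ y ∈ Finset.univ.filter (fun y => y ∈ C), δ x y * β := by
          gcongr with y hy
          simp only [Finset.mem_filter] at hy
          exact ih y hy.2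
      _ = (∑ y ∈ Finset.univ.filter (fun y => y ∈ C), δ x y) * β := by rw [Finset.sum_mul]
      _ ≤ 1 * β := by gcongr; exact sum_filter_le_one δ x _
      _ = β := one_mul β

section Measure

variable [DecidableEq S] [MeasurableSpace S] (st : S) (μ : Measure (ℕ → S))

noncomputable def P (δ : S → PMF S) (st : S) (k : ℕ) (w : ℕ → S) : ℝ≥0∞ :=
  (if w 0 = st then 1 else 0) * ∏ i ∈ Finset.range k, δ (w i) (w (i + 1))

lemma P_extend (k : ℕ) (w : ℕ → S) (y : S) :
    P δ st (k+1) (fun i => if i ≤ k then w i else y) = P δ st k w * δ (w k) y := by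
  unfold P
  have h0 : (if (0:ℕ) ≤ k then w 0 else y) = w 0 := if_pos (Nat.zero_le k)
  rw [Finset.prod_range_succ]
  beta_reduce
  have hmid : ∀ i ∈ Finset.range k,
      δ (if i ≤ k then w i else y) (if i + 1 ≤ k then w (i+1) else y) = δ (w i) (w (i+1)) := by
    intro i hi
    rw [Finset.mem_range] at hi
    rw [if_pos (by omega : i ≤ k), if_pos (by omega : i + 1 ≤ k)]
  rw [Finset.prod_congr rfl hmid, h0]
  rw [if_pos (le_refl k), if_neg (by omega : ¬ k + 1 ≤ k)]
  ring

lemma measure_cyl (hμ : IsMarkovMeasure δ st μ) (k : ℕ) (w : ℕ → S) :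
    μ {ρ | ∀ i ≤ k, ρ i = w i} = P δ st k w := hμ.2 k w

lemma measure_g (hμ : IsMarkovMeasure δ st μ) :
    ∀ (t k : ℕ) (w : ℕ → S),
      μ {ρ | (∀ i ≤ k, ρ i = w i) ∧
             ∀ m, k < m → m ≤ k + t → (ρ m ∈ C ∧ ρ m ≠ c')}
        ≤ P δ st k w * gA δ C c' t (w k) := by
  classical
  intro t
  induction t with
  | zero =>
    intro k w
    have hset : {ρ : ℕ → S | (∀ i ≤ k, ρ i = w i) ∧
        ∀ m, k < m → m ≤ k + 0 → (ρ m ∈ C ∧ ρ m ≠ c')} = {ρ | ∀ i ≤ k, ρ i = w i} := by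
      ext ρ
      simp only [Set.mem_setOf_eq, and_iff_left_iff_imp]
      intro _ m h1 h2
      omega
    rw [hset, measure_cyl δ st μ hμ, gA, mul_one]
  | succ t ih =>
    intro k w
    set T : Finset S := Finset.univ.filter (fun y => y ∈ C ∧ y ≠ c') with hT
    have hsub : {ρ : ℕ → S | (∀ i ≤ k, ρ i = w i) ∧
        ∀ m, k < m → m ≤ k + (t+1) → (ρ m ∈ C ∧ ρ m ≠ c')} ⊆
        ⋃ y ∈ T, {ρ : ℕ → S | (∀ i ≤ k+1, ρ i = (fun i => if i ≤ k then w i else y) i) ∧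
          ∀ m, k+1 < m → m ≤ (k+1) + t → (ρ m ∈ C ∧ ρ m ≠ c')} := by
      intro ρ hρ
      obtain ⟨hcyl, hin⟩ := hρ
      have hk1 := hin (k+1) (by omega) (by omega)
      refine Set.mem_iUnion₂.2 ⟨ρ (k+1), by simp [hT, hk1.1, hk1.2], ?_, ?_⟩
      · intro i hi
        beta_reduce
        rcases Nat.lt_or_ge i (k+1) with h1 | h1
        · rw [if_pos (by omega : i ≤ k)]; exact hcyl i (by omega)
        · have : i = k + 1 := by omega
          rw [this, if_neg (by omega : ¬ k + 1 ≤ k)]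
      · intro m h1 h2
        exact hin m (by omega) (by omega)
    calc μ _ ≤ ∑ y ∈ T, μ {ρ : ℕ → S | (∀ i ≤ k+1, ρ i = (fun i => if i ≤ k then w i else y) i) ∧
          ∀ m, k+1 < m → m ≤ (k+1) + t → (ρ m ∈ C ∧ ρ m ≠ c')} :=
        le_trans (measure_mono hsub) (measure_biUnion_finset_le T _)
      _ ≤ ∑ y ∈ T, P δ st (k+1) (fun i => if i ≤ k then w i else y) *
            gA δ C c' t ((fun i => if i ≤ k then w i else y) (k+1)) := by
          exact Finset.sum_le_sum fun y _ => ih (k+1) _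
      _ = ∑ y ∈ T, P δ st k w * (δ (w k) y * gA δ C c' t y) := by
          refine Finset.sum_congr rfl fun y _ => ?_
          rw [P_extend δ st k w y]
          simp only [if_neg (by omega : ¬ k + 1 ≤ k)]
          ring
      _ = P δ st k w * gA δ C c' (t+1) (w k) := by
          rw [← Finset.mul_sum, hT]
          congr 1
          all_goals simp only [gA]
          all_goals congr

lemma measure_G (hμ : IsMarkovMeasure δ st μ) :
    ∀ (f t k : ℕ) (w : ℕ → S),
      μ {ρ | (∀ i ≤ k, ρ i = w i) ∧
             (∀ m, k < m → m ≤ k + f + t → ρ m ∈ C) ∧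
             (∀ m, k + f < m → m ≤ k + f + t → ρ m ≠ c')}
        ≤ P δ st k w * GA δ C c' f t (w k) := by
  classical
  intro f
  induction f with
  | zero =>
    intro t k w
    have hset : {ρ : ℕ → S | (∀ i ≤ k, ρ i = w i) ∧
        (∀ m, k < m → m ≤ k + 0 + t → ρ m ∈ C) ∧
        (∀ m, k + 0 < m → m ≤ k + 0 + t → ρ m ≠ c')} =
        {ρ : ℕ → S | (∀ i ≤ k, ρ i = w i) ∧
          ∀ m, k < m → m ≤ k + t → (ρ m ∈ C ∧ ρ m ≠ c')} := by
      ext ρ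
      simp only [Set.mem_setOf_eq]
      constructor
      · rintro ⟨h1, h2, h3⟩
        exact ⟨h1, fun m hm hm' => ⟨h2 m (by omega) (by omega), h3 m (by omega) (by omega)⟩⟩
      · rintro ⟨h1, h2⟩
        exact ⟨h1, fun m hm hm' => (h2 m (by omega) (by omega)).1,
          fun m hm hm' => (h2 m (by omega) (by omega)).2⟩
    rw [hset]
    exact measure_g δ C c' st μ hμ t k w
  | succ f ih =>
    intro t k w
    set T : Finset S := Finset.univ.filter (fun y => y ∈ C) with hT
    have hsub : {ρ : ℕ → S | (∀ i ≤ k, ρ i = w i) ∧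
        (∀ m, k < m → m ≤ k + (f+1) + t → ρ m ∈ C) ∧
        (∀ m, k + (f+1) < m → m ≤ k + (f+1) + t → ρ m ≠ c')} ⊆
        ⋃ y ∈ T, {ρ : ℕ → S | (∀ i ≤ k+1, ρ i = (fun i => if i ≤ k then w i else y) i) ∧
          (∀ m, k+1 < m → m ≤ (k+1) + f + t → ρ m ∈ C) ∧
          (∀ m, (k+1) + f < m → m ≤ (k+1) + f + t → ρ m ≠ c')} := by
      intro ρ hρ
      obtain ⟨hcyl, hin, hav⟩ := hρ
      have hk1 := hin (k+1) (by omega) (by omega)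
      refine Set.mem_iUnion₂.2 ⟨ρ (k+1), by simp [hT, hk1], ?_, ?_, ?_⟩
      · intro i hi
        beta_reduce
        rcases Nat.lt_or_ge i (k+1) with h1 | h1
        · rw [if_pos (by omega : i ≤ k)]; exact hcyl i (by omega)
        · have : i = k + 1 := by omega
          rw [this, if_neg (by omega : ¬ k + 1 ≤ k)]
      · intro m h1 h2
        exact hin m (by omega) (by omega)
      · intro m h1 h2
        exact hav m (by omega) (by omega)
    calc μ _ ≤ ∑ y ∈ T, μ {ρ : ℕ → S | (∀ i ≤ k+1, ρ i = (fun i => if i ≤ k then w i else y) i) ∧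
          (∀ m, k+1 < m → m ≤ (k+1) + f + t → ρ m ∈ C) ∧
          (∀ m, (k+1) + f < m → m ≤ (k+1) + f + t → ρ m ≠ c')} :=
        le_trans (measure_mono hsub) (measure_biUnion_finset_le T _)
      _ ≤ ∑ y ∈ T, P δ st (k+1) (fun i => if i ≤ k then w i else y) *
            GA δ C c' f t ((fun i => if i ≤ k then w i else y) (k+1)) := by
          exact Finset.sum_le_sum fun y _ => ih t (k+1) _
      _ = ∑ y ∈ T, P δ st k w * (δ (w k) y * GA δ C c' f t y) := by
          refine Finset.sum_congr rfl fun y _ => ?_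
          rw [P_extend δ st k w y]
          simp only [if_neg (by omega : ¬ k + 1 ≤ k)]
          ring
      _ = P δ st k w * GA δ C c' (f+1) t (w k) := by
          rw [← Finset.mul_sum, hT]
          congr 1
          all_goals simp only [GA]
          all_goals congr

lemma measure_leave (hμ : IsMarkovMeasure δ st μ) (hrec : IsRecClass δ C) :
    ∀ (d k : ℕ) (w : ℕ → S), w k ∈ C →
      μ {ρ | (∀ i ≤ k, ρ i = w i) ∧
             (∀ m, k < m → m < k + 1 + d → ρ m ∈ C) ∧ ρ (k+1+d) ∉ C} = 0 := by
  classical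
  intro d
  induction d with
  | zero =>
    intro k w hw
    refine le_antisymm ?_ (zero_le)
    have hsub : {ρ : ℕ → S | (∀ i ≤ k, ρ i = w i) ∧
        (∀ m, k < m → m < k + 1 + 0 → ρ m ∈ C) ∧ ρ (k+1+0) ∉ C} ⊆
        ⋃ y ∈ Finset.univ.filter (fun y => y ∉ C),
          {ρ : ℕ → S | ∀ i ≤ k+1, ρ i = (fun i => if i ≤ k then w i else y) i} := by
      intro ρ hρ
      obtain ⟨hcyl, _, hout⟩ := hρ
      refine Set.mem_iUnion₂.2 ⟨ρ (k+1), by simpa using hout, ?_⟩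
      intro i hi
      beta_reduce
      rcases Nat.lt_or_ge i (k+1) with h1 | h1
      · rw [if_pos (by omega : i ≤ k)]; exact hcyl i (by omega)
      · have : i = k + 1 := by omega
        rw [this, if_neg (by omega : ¬ k + 1 ≤ k)]
    calc μ _ ≤ ∑ y ∈ Finset.univ.filter (fun y => y ∉ C),
          μ {ρ : ℕ → S | ∀ i ≤ k+1, ρ i = (fun i => if i ≤ k then w i else y) i} :=
        le_trans (measure_mono hsub) (measure_biUnion_finset_le _ _)
      _ = ∑ y ∈ Finset.univ.filter (fun y => y ∉ C), P δ st k w * δ (w k) y := by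
          refine Finset.sum_congr rfl fun y _ => ?_
          rw [measure_cyl δ st μ hμ, P_extend δ st k w y]
      _ = 0 := by
          refine Finset.sum_eq_zero fun y hy => ?_
          rw [Finset.mem_filter] at hy
          have : δ (w k) y = 0 := by
            by_contra hne
            exact hy.2 (hrec.2.2 (w k) hw y hne)
          rw [this, mul_zero]
  | succ d ih =>
    intro k w hw
    refine le_antisymm ?_ (zero_le)
    have hsub : {ρ : ℕ → S | (∀ i ≤ k, ρ i = w i) ∧
        (∀ m, k < m → m < k + 1 + (d+1) → ρ m ∈ C) ∧ ρ (k+1+(d+1)) ∉ C} ⊆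
        ⋃ y ∈ Finset.univ.filter (fun y => y ∈ C),
          {ρ : ℕ → S | (∀ i ≤ k+1, ρ i = (fun i => if i ≤ k then w i else y) i) ∧
            (∀ m, k+1 < m → m < (k+1) + 1 + d → ρ m ∈ C) ∧ ρ ((k+1)+1+d) ∉ C} := by
      intro ρ hρ
      obtain ⟨hcyl, hin, hout⟩ := hρ
      have hk1 : ρ (k+1) ∈ C := hin (k+1) (by omega) (by omega)
      refine Set.mem_iUnion₂.2 ⟨ρ (k+1), by simp [hk1], ?_, ?_, ?_⟩
      · intro i hi
        beta_reduce
        rcases Nat.lt_or_ge i (k+1) with h1 | h1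
        · rw [if_pos (by omega : i ≤ k)]; exact hcyl i (by omega)
        · have : i = k + 1 := by omega
          rw [this, if_neg (by omega : ¬ k + 1 ≤ k)]
      · intro m h1 h2
        exact hin m (by omega) (by omega)
      · have : (k+1)+1+d = k+1+(d+1) := by omega
        rw [this]; exact hout
    calc μ _ ≤ ∑ y ∈ Finset.univ.filter (fun y => y ∈ C),
          μ {ρ : ℕ → S | (∀ i ≤ k+1, ρ i = (fun i => if i ≤ k then w i else y) i) ∧
            (∀ m, k+1 < m → m < (k+1) + 1 + d → ρ m ∈ C) ∧ ρ ((k+1)+1+d) ∉ C} :=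
        le_trans (measure_mono hsub) (measure_biUnion_finset_le _ _)
      _ = 0 := by
          refine Finset.sum_eq_zero fun y hy => ?_
          rw [Finset.mem_filter] at hy
          exact ih (k+1) _ (by simpa using hy.2)

lemma P_le_one (k : ℕ) (w : ℕ → S) : P δ st k w ≤ 1 := by
  unfold P
  refine mul_le_one' ?_ ?_
  · split <;> simp
  · refine Finset.prod_le_one (fun _ _ => zero_le) (fun i _ => ?_)
    exact (δ (w i)).coe_le_one (w (i+1))

lemma h_le_one (n : ℕ) (x : S) : hA δ C c' n x ≤ 1 :=
  le_trans le_add_self (g_add_h_le_one δ C c' n x)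

lemma Bset_null (hμ : IsMarkovMeasure δ st μ) (hrec : IsRecClass δ C) (hc' : c' ∈ C)
    (k : ℕ) (w : ℕ → S) (hwk : w k ∈ C) (n : ℕ) :
    μ {ρ | (∀ i ≤ k, ρ i = w i) ∧ (∀ m, k < m → ρ m ∈ C) ∧
           (∀ m, n ≤ m → ρ m ≠ c')} = 0 := by
  classical
  obtain ⟨N, hN⟩ := exists_N δ C c' hrec hc'
  set CF : Finset S := Finset.univ.filter (fun y => y ∈ C) with hCF
  have hne : CF.Nonempty := by
    obtain ⟨x, hx⟩ := hrec.1
    exact ⟨x, by simp [hCF, hx]⟩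
  set q : ℝ≥0∞ := CF.inf' hne (hA δ C c' N) with hq
  have hq0 : q ≠ 0 := by
    rw [hq, ← pos_iff_ne_zero, Finset.lt_inf'_iff]
    intro y hy
    rw [pos_iff_ne_zero]
    exact hN y (by simpa [hCF] using hy)
  have hq1 : q ≤ 1 := by
    refine le_trans (Finset.inf'_le _ (by simp [hCF, hc'])) (h_le_one δ C c' N c')
  have hgN : ∀ x ∈ C, gA δ C c' N x ≤ 1 - q := by
    intro x hx
    refine ENNReal.le_sub_of_add_le_right (ne_top_of_le_ne_top ENNReal.one_ne_top hq1) ?_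
    calc gA δ C c' N x + q ≤ gA δ C c' N x + hA δ C c' N x := by
          gcongr
          exact Finset.inf'_le _ (by simp [hCF, hx])
      _ ≤ 1 := g_add_h_le_one δ C c' N x
  have hbound : ∀ r : ℕ, μ {ρ : ℕ → S | (∀ i ≤ k, ρ i = w i) ∧ (∀ m, k < m → ρ m ∈ C) ∧
      (∀ m, n ≤ m → ρ m ≠ c')} ≤ (1 - q) ^ r := by
    intro r
    have hsub : {ρ : ℕ → S | (∀ i ≤ k, ρ i = w i) ∧ (∀ m, k < m → ρ m ∈ C) ∧
        (∀ m, n ≤ m → ρ m ≠ c')} ⊆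
        {ρ : ℕ → S | (∀ i ≤ k, ρ i = w i) ∧
          (∀ m, k < m → m ≤ k + n + r * N → ρ m ∈ C) ∧
          (∀ m, k + n < m → m ≤ k + n + r * N → ρ m ≠ c')} := by
      rintro ρ ⟨h1, h2, h3⟩
      exact ⟨h1, fun m hm _ => h2 m hm, fun m hm _ => h3 m (by omega)⟩
    calc μ _ ≤ P δ st k w * GA δ C c' n (r * N) (w k) :=
          le_trans (measure_mono hsub) (measure_G δ C c' st μ hμ n (r * N) k w)
      _ ≤ 1 * ((1 - q) ^ r) := by
          gcongr
          · exact P_le_one δ st k w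
          · exact G_le δ C c' (g_pow δ C c' hgN r) n (w k) hwk
      _ = (1 - q) ^ r := one_mul _
  have htend : Filter.Tendsto (fun r : ℕ => (1 - q) ^ r) Filter.atTop (nhds 0) :=
    ENNReal.tendsto_pow_atTop_nhds_zero_of_lt_one
      (ENNReal.sub_lt_self ENNReal.one_ne_top one_ne_zero hq0)
  exact le_antisymm (ge_of_tendsto' htend hbound) (zero_le)

end Measure

end Stmt7Aux

open Stmt7Aux in
/-- If some recurrent class `C` reachable from `s` satisfies `col(C) ∈ F`, then with
positive probability the set of colors visited infinitely often belongs to `F`. -/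
theorem stmt_7 {S D : Type*} [Fintype S] [DecidableEq S] [MeasurableSpace S]
    (δ : S → PMF S) (col : S → D) (F : Set (Set D)) (s : S)
    (h : ∃ C : Set S, IsRecClass δ C ∧ (∃ c ∈ C, Reach δ s c) ∧ col '' C ∈ F)
    (μ : Measure (ℕ → S)) (hμ : IsMarkovMeasure δ s μ) :
    μ {ρ | col '' {t | ∀ n : ℕ, ∃ m, n ≤ m ∧ ρ m = t} ∈ F} ≠ 0 := by
  classical
  obtain ⟨C, hrec, ⟨c, hcC, hreach⟩, hF⟩ := h
  obtain ⟨k, w, hw0, hwk, hwe⟩ := reach_path δ hreach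
  have hwkC : w k ∈ C := hwk ▸ hcC
  set A : Set (ℕ → S) := {ρ | ∀ i ≤ k, ρ i = w i} with hA
  set G : Set (ℕ → S) := {ρ | (∀ m, k < m → ρ m ∈ C) ∧
    ∀ c' ∈ C, ∀ n : ℕ, ∃ m, n ≤ m ∧ ρ m = c'} with hG
  have hinc : A ∩ G ⊆ {ρ | col '' {t | ∀ n : ℕ, ∃ m, n ≤ m ∧ ρ m = t} ∈ F} := by
    rintro ρ ⟨hρA, hstay, hvisit⟩
    have hinf : {t | ∀ n : ℕ, ∃ m, n ≤ m ∧ ρ m = t} = C := by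
      ext t
      constructor
      · intro ht
        obtain ⟨m, hm1, hm2⟩ := ht (k+1)
        exact hm2 ▸ hstay m (by omega)
      · intro ht
        exact hvisit t ht
    show col '' {t | ∀ n : ℕ, ∃ m, n ≤ m ∧ ρ m = t} ∈ F
    rw [hinf]
    exact hF
  have hμA : μ A = P δ s k w := measure_cyl δ s μ hμ k w
  have hPne : P δ s k w ≠ 0 := by
    unfold P
    rw [if_pos hw0, one_mul]
    rw [Finset.prod_ne_zero_iff]
    intro i hi
    exact hwe i (Finset.mem_range.1 hi)
  have hbad : μ (A \ G) = 0 := by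
    have hsub : A \ G ⊆
        (⋃ d : ℕ, {ρ : ℕ → S | (∀ i ≤ k, ρ i = w i) ∧
          (∀ m, k < m → m < k + 1 + d → ρ m ∈ C) ∧ ρ (k+1+d) ∉ C}) ∪
        (⋃ c' : S, ⋃ (_ : c' ∈ C), ⋃ n : ℕ,
          {ρ : ℕ → S | (∀ i ≤ k, ρ i = w i) ∧ (∀ m, k < m → ρ m ∈ C) ∧
            (∀ m, n ≤ m → ρ m ≠ c')}) := by
      rintro ρ ⟨hρA, hρG⟩
      rw [hG, Set.mem_setOf_eq] at hρG
      push_neg at hρG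
      by_cases hstay : ∀ m, k < m → ρ m ∈ C
      · obtain ⟨c', hc', n, hn⟩ := hρG hstay
        refine Or.inr (Set.mem_iUnion.2 ⟨c', Set.mem_iUnion.2 ⟨hc',
          Set.mem_iUnion.2 ⟨n, hρA, hstay, ?_⟩⟩⟩)
        intro m hm heq
        exact (hn m hm heq).elim
      · push_neg at hstay
        obtain ⟨m₀, hm₀k, hm₀C⟩ := hstay
        have hex : ∃ m, k < m ∧ ρ m ∉ C := ⟨m₀, hm₀k, hm₀C⟩
        have hmm := Nat.find_spec hex
        have hmin : ∀ m < Nat.find hex, ¬ (k < m ∧ ρ m ∉ C) :=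
          fun m hm => Nat.find_min hex hm
        refine Or.inl (Set.mem_iUnion.2 ⟨Nat.find hex - (k+1), hρA, ?_, ?_⟩)
        · intro m hm1 hm2
          by_contra hmC
          exact hmin m (by omega) ⟨hm1, hmC⟩
        · have : k + 1 + (Nat.find hex - (k+1)) = Nat.find hex := by omega
          rw [this]
          exact hmm.2
    refine measure_mono_null hsub ?_
    refine le_antisymm (le_trans (measure_union_le _ _) ?_) (zero_le)
    have h1 : μ (⋃ d : ℕ, {ρ : ℕ → S | (∀ i ≤ k, ρ i = w i) ∧
        (∀ m, k < m → m < k + 1 + d → ρ m ∈ C) ∧ ρ (k+1+d) ∉ C}) = 0 :=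
      measure_iUnion_null fun d => measure_leave δ C s μ hμ hrec d k w hwkC
    have h2 : μ (⋃ c' : S, ⋃ (_ : c' ∈ C), ⋃ n : ℕ,
        {ρ : ℕ → S | (∀ i ≤ k, ρ i = w i) ∧ (∀ m, k < m → ρ m ∈ C) ∧
          (∀ m, n ≤ m → ρ m ≠ c')}) = 0 :=
      measure_iUnion_null fun c' => measure_iUnion_null fun hc' =>
        measure_iUnion_null fun n => Bset_null δ C c' s μ hμ hrec hc' k w hwkC n
    rw [h1, h2, add_zero]
  have hAG : μ (A ∩ G) ≠ 0 := by
    intro h0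
    have hA0 : μ A = 0 := by
      have hle := measure_union_le (μ := μ) (A ∩ G) (A \ G)
      rw [Set.inter_union_diff] at hle
      rw [h0, hbad, add_zero] at hle
      exact le_antisymm hle (zero_le)
    rw [hμA] at hA0
    exact hPne hA0
  intro h0
  exact hAG (le_antisymm (le_trans (measure_mono hinc) h0.le) (zero_le))
end

section
/- In a finite Markov chain over S × M with coloring col : S → D, from every state (X, m) some pseudo-recurrent state is reachable, where a state (X', m') is pseudo-recurrent if (X', m') is recurrent and the set of color-projections of recurrent classes reachable from it is a singleton {Z∞} with col(X') ∈ Z∞. Consequently, from every starting state a pseudo-recurrent state is reached with probability 1. -/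
open MeasureTheory
open scoped ENNReal

/-- `SetRec δ col m s`: the set of color-projections of the recurrent classes of the
Markov chain `δ` on `S × M` reachable from `(s, m)`. -/
def SetRec {S M D : Type*} (δ : S × M → PMF (S × M)) (col : S → D) (m : M) (s : S) :
    Set (Set D) :=
  {Z | ∃ U : Set (S × M), IsRecClass δ U ∧ (∃ u ∈ U, Reach δ (s, m) u) ∧
        Z = col '' (Prod.fst '' U)}

/-- A state `(X', m')` is pseudo-recurrent if it is recurrent and the set of
color-projections of recurrent classes reachable from it is a singleton `{Z∞}`
with `col X' ∈ Z∞`. -/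
def IsPseudoRec {S M D : Type*} (δ : S × M → PMF (S × M)) (col : S → D)
    (x : S × M) : Prop :=
  (∃ C : Set (S × M), IsRecClass δ C ∧ x ∈ C) ∧
  ∃ Z : Set D, SetRec δ col x.2 x.1 = {Z} ∧ col x.1 ∈ Z

lemma reach_mem {S : Type*} {δ : S → PMF S} {C : Set S}
    (hC : ∀ a ∈ C, ∀ b, δ a b ≠ 0 → b ∈ C) {y z : S} (hy : y ∈ C)
    (h : Reach δ y z) : z ∈ C := by
  induction h with
  | refl => exact hy
  | tail _ hbc ih => exact hC _ ih _ hbc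

open Classical in
lemma reach_rec {Q : Type*} [Fintype Q] (δ : Q → PMF Q) (x : Q) :
    ∃ C : Set Q, IsRecClass δ C ∧ ∃ y ∈ C, Reach δ x y := by
  classical
  set s : Finset Q := Finset.univ.filter (fun y => Reach δ x y) with hs
  have hxs : x ∈ s := by
    simp only [hs, Finset.mem_filter, Finset.mem_univ, true_and]
    exact Relation.ReflTransGen.refl
  obtain ⟨y, hys, hymin⟩ := s.exists_min_image
    (fun y => (Finset.univ.filter (fun z => Reach δ y z)).card) ⟨x, hxs⟩
  have hxy : Reach δ x y := by simpa [hs] using hys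
  refine ⟨{z | Reach δ y z}, ⟨⟨y, Relation.ReflTransGen.refl⟩, ?_, ?_⟩, y,
    Relation.ReflTransGen.refl, hxy⟩
  · -- mutual reachability
    have key : ∀ z, Reach δ y z → Reach δ z y := by
      intro z hz
      have hzs : z ∈ s := by
        simp only [hs, Finset.mem_filter, Finset.mem_univ, true_and]
        exact hxy.trans hz
      have hsub : Finset.univ.filter (fun w => Reach δ z w) ⊆
          Finset.univ.filter (fun w => Reach δ y w) := by
        intro w hw
        simp only [Finset.mem_filter, Finset.mem_univ, true_and] at hw ⊢
        exact hz.trans hw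
      have hcard := hymin z hzs
      have heq := Finset.eq_of_subset_of_card_le hsub hcard
      have : y ∈ Finset.univ.filter (fun w => Reach δ z w) := by
        rw [heq]
        exact Finset.mem_filter.mpr ⟨Finset.mem_univ _, Relation.ReflTransGen.refl⟩
      simpa using this
    intro a ha b hb
    exact (key a ha).trans hb
  · intro a ha b hab
    exact Relation.ReflTransGen.tail ha hab


lemma rec_isPseudoRec {S M D : Type*} (δ : S × M → PMF (S × M)) (col : S → D)
    {C : Set (S × M)} (hC : IsRecClass δ C) {y : S × M} (hy : y ∈ C) :
    IsPseudoRec δ col y := by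
  obtain ⟨hne, hmut, hcl⟩ := hC
  refine ⟨⟨C, ⟨hne, hmut, hcl⟩, hy⟩, col '' (Prod.fst '' C), ?_, ?_⟩
  · ext Z
    simp only [SetRec, Set.mem_setOf_eq, Set.mem_singleton_iff]
    constructor
    · rintro ⟨U, hU, ⟨u, huU, hreach⟩, rfl⟩
      have huC : u ∈ C := by
        apply reach_mem hcl hy
        simpa using hreach
      have hUC : U = C := by
        apply Set.Subset.antisymm
        · intro w hw
          exact reach_mem hcl huC (hU.2.1 u huU w hw)
        · intro c hc
          exact reach_mem hU.2.2 huU (hmut u huC c hc)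
      rw [hUC]
    · rintro rfl
      exact ⟨C, ⟨hne, hmut, hcl⟩, ⟨y, hy, by exact Relation.ReflTransGen.refl⟩, rfl⟩
  · exact ⟨y.1, ⟨y, hy, rfl⟩, rfl⟩

section hitF
variable {Q : Type*} [Fintype Q]

open Classical in
noncomputable def hitF (δ : Q → PMF Q) (T : Set Q) : ℕ → Q → ℝ≥0∞
  | 0 => fun x => if x ∈ T then 0 else 1
  | n+1 => fun x => if x ∈ T then 0 else ∑ a, δ x a * hitF δ T n a

variable (δ : Q → PMF Q) (T : Set Q)

lemma sum_delta (x : Q) : ∑ a : Q, (δ x a : ℝ≥0∞) = 1 := by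
  rw [← (δ x).tsum_coe]; exact (tsum_fintype _).symm

open Classical in
lemma hitF_mem {x : Q} (h : x ∈ T) (n : ℕ) : hitF δ T n x = 0 := by
  cases n <;> simp [hitF, h]

open Classical in
lemma hitF_succ {x : Q} (h : x ∉ T) (n : ℕ) :
    hitF δ T (n + 1) x = ∑ a, δ x a * hitF δ T n a := by
  simp [hitF, h]

open Classical in
lemma hitF_zero_notmem {x : Q} (h : x ∉ T) : hitF δ T 0 x = 1 := by
  simp [hitF, h]

lemma hitF_le_one (n : ℕ) (x : Q) : hitF δ T n x ≤ 1 := by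
  classical
  induction n generalizing x with
  | zero => by_cases h : x ∈ T <;> simp [hitF, h]
  | succ n ih =>
    by_cases h : x ∈ T
    · simp [hitF, h]
    · rw [hitF_succ δ T h]
      calc ∑ a, δ x a * hitF δ T n a ≤ ∑ a, δ x a * 1 :=
            Finset.sum_le_sum fun a _ => mul_le_mul_right (ih a) _
        _ = 1 := by simp [sum_delta δ]

lemma hitF_anti (n : ℕ) (x : Q) : hitF δ T (n + 1) x ≤ hitF δ T n x := by
  classical
  induction n generalizing x with
  | zero =>
    by_cases h : x ∈ T
    · simp [hitF_mem δ T h]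
    · rw [hitF_zero_notmem δ T h]; exact hitF_le_one δ T 1 x
  | succ n ih =>
    by_cases h : x ∈ T
    · simp [hitF_mem δ T h]
    · rw [hitF_succ δ T h, hitF_succ δ T h]
      exact Finset.sum_le_sum fun a _ => mul_le_mul_right (ih a) _

lemma hitF_antitone (x : Q) : Antitone (fun n => hitF δ T n x) :=
  antitone_nat_of_succ_le fun n => hitF_anti δ T n x

lemma hitF_submult (n : ℕ) : ∀ m x,
    hitF δ T (m + n) x ≤ (Finset.univ.sup (hitF δ T n)) * hitF δ T m x := by
  classical
  intro m
  induction m with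
  | zero =>
    intro x
    by_cases h : x ∈ T
    · simp [hitF_mem δ T h]
    · rw [Nat.zero_add, hitF_zero_notmem δ T h, mul_one]
      exact Finset.le_sup (Finset.mem_univ x)
  | succ m ih =>
    intro x
    by_cases h : x ∈ T
    · simp [hitF_mem δ T h]
    · have : m + 1 + n = (m + n) + 1 := by omega
      rw [this, hitF_succ δ T h, hitF_succ δ T h, Finset.mul_sum]
      refine Finset.sum_le_sum fun a _ => ?_
      calc δ x a * hitF δ T (m + n) a
          ≤ δ x a * ((Finset.univ.sup (hitF δ T n)) * hitF δ T m a) :=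
            mul_le_mul_right (ih a) _
        _ = (Finset.univ.sup (hitF δ T n)) * (δ x a * hitF δ T m a) := by rw [mul_left_comm]

lemma hitF_pow (N : ℕ) (k : ℕ) (x : Q) :
    hitF δ T (k * N) x ≤ (Finset.univ.sup (hitF δ T N)) ^ k := by
  induction k with
  | zero => simpa using hitF_le_one δ T 0 x
  | succ k ih =>
    have : (k + 1) * N = k * N + N := by ring
    rw [this, pow_succ']
    calc hitF δ T (k * N + N) x
        ≤ (Finset.univ.sup (hitF δ T N)) * hitF δ T (k * N) x := hitF_submult δ T N _ x
      _ ≤ (Finset.univ.sup (hitF δ T N)) * (Finset.univ.sup (hitF δ T N)) ^ k :=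
          mul_le_mul_right ih _

lemma hitF_lt_one {x t : Q} (hreach : Relation.ReflTransGen (fun s s' => δ s s' ≠ 0) x t)
    (ht : t ∈ T) : ∃ n, hitF δ T n x < 1 := by
  classical
  induction hreach using Relation.ReflTransGen.head_induction_on with
  | refl => exact ⟨0, by simp [hitF_mem δ T ht]⟩
  | head hedge _ ih =>
    rename_i a b _
    obtain ⟨n, hn⟩ := ih
    by_cases h : a ∈ T
    · exact ⟨0, by simp [hitF_mem δ T h]⟩
    · refine ⟨n + 1, ?_⟩
      rw [hitF_succ δ T h]
      have hne : (δ a b : ℝ≥0∞) ≠ ⊤ :=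
        (lt_of_le_of_lt (PMF.coe_le_one _ _) ENNReal.one_lt_top).ne
      have h1 : δ a b * hitF δ T n b < δ a b * 1 := by
        rw [ENNReal.mul_lt_mul_iff_right hedge hne]
        exact hn
      have hsplit : ∑ c, δ a c * hitF δ T n c
          = δ a b * hitF δ T n b + ∑ c ∈ Finset.univ.erase b, δ a c * hitF δ T n c :=
        (Finset.add_sum_erase _ (fun c => δ a c * hitF δ T n c) (Finset.mem_univ b)).symm
      have hsplit2 : (1 : ℝ≥0∞) = δ a b + ∑ c ∈ Finset.univ.erase b, (δ a c : ℝ≥0∞) := by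
        rw [Finset.add_sum_erase _ (fun c => (δ a c : ℝ≥0∞)) (Finset.mem_univ b), sum_delta δ]
      rw [hsplit, hsplit2]
      have hrest : ∑ c ∈ Finset.univ.erase b, δ a c * hitF δ T n c
          ≤ ∑ c ∈ Finset.univ.erase b, (δ a c : ℝ≥0∞) :=
        Finset.sum_le_sum fun c _ => by
          calc δ a c * hitF δ T n c ≤ δ a c * 1 := mul_le_mul_right (hitF_le_one δ T n c) _
            _ = δ a c := mul_one _
      have hfin : ∑ c ∈ Finset.univ.erase b, δ a c * hitF δ T n c ≠ ⊤ := by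
        refine ne_top_of_le_ne_top ?_ hrest
        refine ne_top_of_le_ne_top ENNReal.one_ne_top ?_
        calc ∑ c ∈ Finset.univ.erase b, (δ a c : ℝ≥0∞)
            ≤ ∑ c, (δ a c : ℝ≥0∞) := Finset.sum_le_sum_of_subset (Finset.subset_univ _)
          _ = 1 := sum_delta δ a
      rw [mul_one] at h1
      exact ENNReal.add_lt_add_of_lt_of_le hfin h1 hrest

open Classical in
lemma hitF_eq_sum (n : ℕ) (x : Q) :
    hitF δ T n x = ∑ v : Fin (n + 1) → Q,
      if v 0 = x ∧ ∀ i, v i ∉ T then ∏ i : Fin n, δ (v i.castSucc) (v i.succ) else 0 := by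
  induction n generalizing x with
  | zero =>
    rw [Fintype.sum_equiv (Equiv.funUnique (Fin 1) Q)
      _ (fun a => if a = x ∧ a ∉ T then 1 else 0) ?_]
    · by_cases h : x ∈ T <;>
        simp [hitF, h, ite_and, Finset.sum_ite_eq']
    · intro v
      simp [Fin.forall_fin_one, Equiv.funUnique]
  | succ n ih =>
    rw [← Equiv.sum_comp (Fin.consEquiv (fun _ : Fin (n + 2) => Q)), Fintype.sum_prod_type]
    have hF : ∀ (a : Q) (u : Fin (n + 1) → Q),
        (if (Fin.consEquiv (fun _ : Fin (n + 2) => Q)) (a, u) 0 = x ∧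
            (∀ i, (Fin.consEquiv (fun _ : Fin (n + 2) => Q)) (a, u) i ∉ T) then
          ∏ i : Fin (n + 1), δ ((Fin.consEquiv (fun _ : Fin (n + 2) => Q)) (a, u) i.castSucc)
            ((Fin.consEquiv (fun _ : Fin (n + 2) => Q)) (a, u) i.succ) else 0)
        = if a = x then
            (if a ∉ T ∧ ∀ i, u i ∉ T then
              δ a (u 0) * ∏ i : Fin n, δ (u i.castSucc) (u i.succ) else 0) else 0 := by
      intro a u
      have hcons : ((Fin.consEquiv (fun _ : Fin (n + 2) => Q)) (a, u) : Fin (n+2) → Q)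
          = (Fin.cons a u : Fin (n + 2) → Q) := rfl
      rw [hcons]
      have hc : (∀ i : Fin (n + 2), (Fin.cons a u : Fin (n + 2) → Q) i ∉ T) ↔
          (a ∉ T ∧ ∀ i : Fin (n + 1), u i ∉ T) := by
        rw [Fin.forall_fin_succ]
        simp [Fin.cons_succ]
      have hp : ∏ i : Fin (n + 1), δ ((Fin.cons a u : Fin (n + 2) → Q) i.castSucc)
            ((Fin.cons a u : Fin (n + 2) → Q) i.succ)
          = δ a (u 0) * ∏ i : Fin n, δ (u i.castSucc) (u i.succ) := by
        rw [Fin.prod_univ_succ]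
        have h0 : (δ ((Fin.cons a u : Fin (n + 2) → Q) (0 : Fin (n+1)).castSucc))
            ((Fin.cons a u : Fin (n + 2) → Q) (0 : Fin (n+1)).succ) = δ a (u 0) := by
          simp
        rw [h0]
        congr 1
      by_cases h1 : a = x
      · by_cases h2 : a ∉ T ∧ ∀ i, u i ∉ T
        · rw [if_pos ⟨by simp [h1], hc.mpr h2⟩, if_pos h1, if_pos h2, hp]
        · rw [if_neg (fun hh => h2 (hc.mp hh.2)), if_pos h1, if_neg h2]
      · rw [if_neg (fun hh => h1 (by simpa using hh.1)), if_neg h1]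
    simp_rw [hF]
    rw [Finset.sum_comm]
    simp_rw [Finset.sum_ite_eq' Finset.univ x, if_pos (Finset.mem_univ x)]
    by_cases h : x ∈ T
    · simp [hitF, h]
    · rw [show hitF δ T (n+1) x = ∑ a, δ x a * hitF δ T n a from by simp [hitF, h]]
      simp_rw [ih, Finset.mul_sum, mul_ite, mul_zero]
      rw [Finset.sum_comm]
      refine Finset.sum_congr rfl fun u _ => ?_
      simp_rw [ite_and]
      rw [Finset.sum_ite_eq Finset.univ (u 0)
        (fun a => if (∀ i, u i ∉ T) then δ x a * ∏ i : Fin n, δ (u i.castSucc) (u i.succ) else 0),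
        if_pos (Finset.mem_univ _)]
      simp [h]

end hitF

def extPath {Q : Type*} (n : ℕ) (v : Fin (n + 1) → Q) : ℕ → Q :=
  fun i => if h : i < n + 1 then v ⟨i, h⟩ else v 0

/-- From every state some pseudo-recurrent state is reachable; consequently, from
every starting state a pseudo-recurrent state is reached with probability 1. -/
theorem stmt_15 {S M D : Type*} [Fintype S] [Fintype M]
    [DecidableEq S] [DecidableEq M] [MeasurableSpace S] [MeasurableSpace M]
    (δ : S × M → PMF (S × M)) (col : S → D) :
    (∀ x : S × M, ∃ y : S × M, Reach δ x y ∧ IsPseudoRec δ col y) ∧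
    ∀ (x : S × M) (μ : Measure (ℕ → S × M)), IsMarkovMeasure δ x μ →
      μ {ρ | ∃ n, IsPseudoRec δ col (ρ n)} = 1 := by
  classical
  have part1 : ∀ x : S × M, ∃ y : S × M, Reach δ x y ∧ IsPseudoRec δ col y := by
    intro x
    obtain ⟨C, hC, y, hyC, hxy⟩ := reach_rec δ x
    exact ⟨y, hxy, rec_isPseudoRec δ col hC hyC⟩
  refine ⟨part1, ?_⟩
  rintro x μ ⟨hprob, hcyl⟩
  set T : Set (S × M) := {y | IsPseudoRec δ col y} with hT
  set A : Set (ℕ → S × M) := {ρ | ∃ n, IsPseudoRec δ col (ρ n)} with hA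
  -- covering bound
  have cover : ∀ n : ℕ, μ Aᶜ ≤ hitF δ T n x := by
    intro n
    set An : Finset (Fin (n + 1) → S × M) :=
      Finset.univ.filter (fun v => ∀ i, v i ∉ T) with hAn
    have hsub : Aᶜ ⊆ ⋃ v ∈ An, {ρ | ∀ i ≤ n, ρ i = extPath n v i} := by
      intro ρ hρ
      simp only [hA, Set.mem_compl_iff, Set.mem_setOf_eq, not_exists] at hρ
      have h1 : (fun i : Fin (n + 1) => ρ i) ∈ An := by
        simp only [hAn, Finset.mem_filter, Finset.mem_univ, true_and]
        intro i
        exact hρ i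
      refine Set.mem_biUnion h1 ?_
      intro i hi
      rw [extPath, dif_pos (by omega : i < n + 1)]
    calc μ Aᶜ ≤ ∑ v ∈ An, μ {ρ | ∀ i ≤ n, ρ i = extPath n v i} :=
          (measure_mono hsub).trans (measure_biUnion_finset_le An _)
      _ = ∑ v ∈ An, (if extPath n v 0 = x then 1 else 0) *
            ∏ i ∈ Finset.range n, δ (extPath n v i) (extPath n v (i + 1)) := by
          exact Finset.sum_congr rfl fun v _ => hcyl n (extPath n v)
      _ = hitF δ T n x := by
          rw [hitF_eq_sum, hAn, Finset.sum_filter]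
          refine Finset.sum_congr rfl fun v _ => ?_
          have he0 : extPath n v 0 = v 0 := by
            rw [extPath, dif_pos (Nat.succ_pos n)]
            exact congrArg v (Fin.ext (by simp))
          have hprod : ∏ i ∈ Finset.range n, δ (extPath n v i) (extPath n v (i + 1))
              = ∏ i : Fin n, δ (v i.castSucc) (v i.succ) := by
            rw [← Fin.prod_univ_eq_prod_range
              (fun i => (δ (extPath n v i)) (extPath n v (i + 1))) n]
            refine Finset.prod_congr rfl fun i _ => ?_
            have h1 : extPath n v (i : ℕ) = v i.castSucc := by
              rw [extPath, dif_pos (by omega : (i : ℕ) < n + 1)]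
              exact congrArg v (Fin.ext rfl)
            have h2 : extPath n v ((i : ℕ) + 1) = v i.succ := by
              rw [extPath, dif_pos (by omega : (i : ℕ) + 1 < n + 1)]
              exact congrArg v (Fin.ext rfl)
            rw [h1, h2]
          by_cases hav : ∀ i, v i ∉ T
          · rw [if_pos hav]
            by_cases h0 : v 0 = x
            · rw [he0, if_pos h0, if_pos ⟨h0, hav⟩, one_mul, hprod]
            · rw [he0, if_neg h0, if_neg (fun hh => h0 hh.1), zero_mul]
          · rw [if_neg hav, if_neg (fun hh => hav hh.2)]
  -- reach pseudo-recurrent from everywhere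
  have hex : ∀ s : S × M, ∃ ns : ℕ, hitF δ T ns s < 1 := by
    intro s
    obtain ⟨t, hst, ht⟩ := part1 s
    exact hitF_lt_one δ T hst ht
  choose nn hnn using hex
  set N : ℕ := Finset.univ.sup nn with hN
  set c : ℝ≥0∞ := Finset.univ.sup (hitF δ T N) with hc
  have hc1 : c < 1 := by
    rw [hc, Finset.sup_lt_iff (by simp : (⊥ : ℝ≥0∞) < 1)]
    intro s _
    exact lt_of_le_of_lt (hitF_antitone δ T s (Finset.le_sup (Finset.mem_univ s))) (hnn s)
  have hbk : ∀ k : ℕ, μ Aᶜ ≤ c ^ k := fun k =>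
    (cover (k * N)).trans (hitF_pow δ T N k x)
  have h0 : μ Aᶜ = 0 := by
    refine le_antisymm ?_ (zero_le)
    exact ge_of_tendsto (ENNReal.tendsto_pow_atTop_nhds_zero_of_lt_one hc1)
      (Filter.Eventually.of_forall hbk)
  haveI := hprob
  refine le_antisymm prob_le_one ?_
  calc (1 : ℝ≥0∞) = μ Set.univ := (measure_univ).symm
    _ ≤ μ A + μ Aᶜ := by
        rw [← Set.union_compl_self A]
        exact measure_union_le A Aᶜ
    _ = μ A := by rw [h0, add_zero]
end

section
/- Given a POMDP G with |S| states and a parity objective with 2d+2 priorities {0,…,2d+1}, the reduction POMDP Ḡ on state set S × {0,…,d} (with transitions mimicking G but moving to copy i−1 with probability 1/2 from states of priority < 2i) satisfies: every recurrent class of Ḡ↾σ, for any finite-memory strategy σ, is contained in a single copy S × {i} × M, and contains no state (s,i,m) with p(s) < 2i. -/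
open MeasureTheory

/-- The reduction POMDP `Ḡ` on `S × {0,…,d}`: the chain `Ḡ↾σ` induced by a
finite-memory strategy `σ` (action selection `σn`, memory update `σu`) has the
property that every recurrent class is contained in a single copy `S × {i} × M`
and contains no state `(s,i,m)` with `p s < 2i`. -/
theorem stmt_17 {S A O M : Type*} [Fintype S] [Fintype A] [Fintype M]
    (d : ℕ) (δ : S → A → PMF S) (p : S → ℕ) (hp : ∀ s, p s ≤ 2 * d + 1)
    (γ : S → O) (σn : M → PMF A) (σu : M → O → A → PMF M)
    (chain : S × Fin (d + 1) × M → PMF (S × Fin (d + 1) × M))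
    (hchain : ∀ (s : S) (i : Fin (d + 1)) (m : M) (s' : S) (j : Fin (d + 1)) (m' : M),
      chain (s, i, m) (s', j, m') =
        ∑ a : A, σn m a *
          (if (j : ℕ) = (i : ℕ) then
             (if 2 * (i : ℕ) ≤ p s then δ s a s' else δ s a s' / 2)
           else if (j : ℕ) + 1 = (i : ℕ) ∧ p s < 2 * (i : ℕ) then δ s a s' / 2
           else 0) * σu m (γ s') a m')
    (C : Set (S × Fin (d + 1) × M)) (hC : IsRecClass chain C) :
    ∃ i : Fin (d + 1), (∀ x ∈ C, x.2.1 = i) ∧ ∀ x ∈ C, 2 * (i : ℕ) ≤ p x.1 := by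

  obtain ⟨hne, hmut, hclosed⟩ := hC
  -- edge lemma: positive transitions keep index or drop by one (with priority condition)
  have edge : ∀ x y : S × Fin (d + 1) × M, chain x y ≠ 0 →
      ((y.2.1 : ℕ) = (x.2.1 : ℕ) ∨ ((y.2.1 : ℕ) + 1 = (x.2.1 : ℕ) ∧ p x.1 < 2 * (x.2.1 : ℕ))) := by
    rintro ⟨s, i, m⟩ ⟨s', j, m'⟩ h
    by_contra hcon
    push_neg at hcon
    apply h
    rw [hchain]
    apply Finset.sum_eq_zero
    intro a _
    have h1 : ¬ ((j : ℕ) = (i : ℕ)) := hcon.1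
    have h2 : ¬ ((j : ℕ) + 1 = (i : ℕ) ∧ p s < 2 * (i : ℕ)) := by
      rintro ⟨ha, hb⟩
      have := hcon.2 ha
      simp only at this
      omega
    rw [if_neg h1, if_neg h2, mul_zero, zero_mul]
  -- index is monotone nonincreasing along reachability
  have reach_le : ∀ x y : S × Fin (d + 1) × M, Reach chain x y →
      (y.2.1 : ℕ) ≤ (x.2.1 : ℕ) := by
    intro x y h
    induction h with
    | refl => exact le_refl _
    | tail _ hbc ih =>
        rcases edge _ _ hbc with h' | ⟨h', _⟩ <;> omega
  obtain ⟨x₀, hx₀⟩ := hne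
  refine ⟨x₀.2.1, ?_, ?_⟩
  · intro x hx
    have h1 := reach_le _ _ (hmut _ hx₀ _ hx)
    have h2 := reach_le _ _ (hmut _ hx _ hx₀)
    exact Fin.ext (by omega)
  · intro x hx
    by_contra hlt
    push_neg at hlt
    -- x = (s, i, m) with p s < 2 i
    obtain ⟨s, i, m⟩ := x
    have hi : (i : ℕ) = (x₀.2.1 : ℕ) := by
      have h1 : (i : ℕ) ≤ (x₀.2.1 : ℕ) := reach_le _ _ (hmut _ hx₀ _ hx)
      have h2 : (x₀.2.1 : ℕ) ≤ (i : ℕ) := reach_le _ _ (hmut _ hx _ hx₀)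
      omega
    have hlt' : p s < 2 * (i : ℕ) := by
      have h3 : p s < 2 * (x₀.2.1 : ℕ) := hlt
      omega
    have hipos : 1 ≤ (i : ℕ) := by omega
    set j : Fin (d + 1) := ⟨(i : ℕ) - 1, by omega⟩ with hj
    have hj1 : (j : ℕ) + 1 = (i : ℕ) := by simp [hj]; omega
    -- pick support elements
    obtain ⟨a, ha⟩ := (σn m).support_nonempty
    obtain ⟨s', hs'⟩ := (δ s a).support_nonempty
    obtain ⟨m', hm'⟩ := (σu m (γ s') a).support_nonempty
    rw [PMF.mem_support_iff] at ha hs' hm'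
    have hpos : chain (s, i, m) (s', j, m') ≠ 0 := by
      rw [hchain]
      intro h0
      have := (Finset.sum_eq_zero_iff.mp h0) a (Finset.mem_univ a)
      rw [if_neg (by omega), if_pos ⟨hj1, hlt'⟩] at this
      have hd2 : δ s a s' / 2 ≠ 0 := by
        simp [ENNReal.div_eq_zero_iff, hs']
      exact (mul_ne_zero (mul_ne_zero ha hd2) hm') this
    have hmem := hclosed _ hx _ hpos
    -- but index of (s', j, m') is i - 1 < i, contradicting mutual reachability
    have := reach_le _ _ (hmut _ hmem _ hx)
    simp [hj] at this
    omega
end
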